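/- Let n > 4 be an even integer and α > 0. Then for every b ∈ [0,1] there exists a unique a ∈ (0,1) satisfying 1 − 2a = tanh( (α/(2n²)) (n/2 − 1) ( (n/2)(a + b)² − 2a² ) ). -/
import Mathlib


open MeasureTheory ProbabilityTheory Real Set

noncomputable section

/-- The real-valued vertex configuration associated to a boolean configuration. -/
def boolToR (n : ℕ) (X : Fin n → Bool) : Fin n → ℝ := fun i => if X i then 1 else 0

/-- The 1-norm on ℝⁿ. -/
def norm1 (n : ℕ) (x : Fin n → ℝ) : ℝ := ∑ i, |x i|

/-- `C_j^m(X)`: the sum over (m-1)-tuples of pairwise distinct indices, all distinct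
from `j`, of the products of the corresponding entries of `X`; `C_j^1 = 1`. -/
def Cvec (n m : ℕ) (X : Fin n → ℝ) (j : Fin n) : ℝ :=
  ∑ g ∈ Finset.univ.filter (fun g : Fin (m - 1) ↪ Fin n => ∀ k, g k ≠ j),
    ∏ k, X (g k)

/-- The subgraph counting function with parameters `p`, `m₁,…,m_l`, `α₁,…,α_l`. -/
def scf (n l : ℕ) (p : ℝ) (m : Fin l → ℕ) (α : Fin l → ℝ) (X : Fin n → ℝ) : ℝ :=
  (∑ q, (α q / (n : ℝ) ^ (m q - 1)) * ∑ g : Fin (m q) ↪ Fin n, ∏ k, X (g k)) +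
    Real.log (p / (1 - p)) * ∑ i, |X i|

/-- The discrete derivative `∂ⱼf(X) = (f(X^{j←1}) - f(X^{j←0}))/2`. -/
def dder (n : ℕ) (f : (Fin n → ℝ) → ℝ) (X : Fin n → ℝ) (j : Fin n) : ℝ :=
  (f (Function.update X j 1) - f (Function.update X j 0)) / 2

/-- The polynomial extension of the discrete gradient of the subgraph counting function:
`∂ⱼf(X) = Σ_q (m_q α_q/(2 n^{m_q-1})) C_j^{m_q}(X) + ½ log(p/(1-p))`. -/
def gradf (n l : ℕ) (p : ℝ) (m : Fin l → ℕ) (α : Fin l → ℝ) (X : Fin n → ℝ)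
    (j : Fin n) : ℝ :=
  (∑ q, ((m q : ℝ) * α q / (2 * (n : ℝ) ^ (m q - 1))) * Cvec n (m q) X j) +
    Real.log (p / (1 - p)) / 2

/-- `C_α = max{2, ½|log(p/(1-p))| + ½ Σ_q |α_q| m_q (m_q - 1)}`. -/
def Calpha (l : ℕ) (p : ℝ) (m : Fin l → ℕ) (α : Fin l → ℝ) : ℝ :=
  max 2 (|Real.log (p / (1 - p))| / 2 + (∑ q, |α q| * (m q : ℝ) * ((m q : ℝ) - 1)) / 2)

/-- `Φ(X) = (1ₙ + tanh(∇f(X)))/2`, entrywise. -/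
def Phi (n l : ℕ) (p : ℝ) (m : Fin l → ℕ) (α : Fin l → ℝ) (X : Fin n → ℝ) :
    Fin n → ℝ :=
  fun j => (1 + Real.tanh (gradf n l p m α X j)) / 2

/-- The set `X_f` of near fixed points of `X ↦ (1ₙ + tanh(∇f(X)))/2` in `[0,1]ⁿ`. -/
def Xf (n l : ℕ) (p : ℝ) (m : Fin l → ℕ) (α : Fin l → ℝ) : Set (Fin n → ℝ) :=
  {X | (∀ i, X i ∈ Set.Icc (0:ℝ) 1) ∧
    norm1 n (fun j => X j - Phi n l p m α X j) ≤
      5000 * (Calpha l p m α) ^ 2 * (n : ℝ) ^ ((7:ℝ)/8)}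

/-- The one-dimensional fixed point function `φ_α`. -/
def phiA (n l : ℕ) (p : ℝ) (m : Fin l → ℕ) (α : Fin l → ℝ) (x : ℝ) : ℝ :=
  (1 + Real.tanh (Real.log (p / (1 - p)) / 2 +
    (∑ q, (m q : ℝ) * α q * (∏ i ∈ Finset.Icc 1 (m q - 1), (1 - (i : ℝ) / n)) *
      x ^ (m q - 1)) / 2)) / 2

lemma myTanhLtOne (x : ℝ) : Real.tanh x < 1 := by
  rw [Real.tanh_eq_sinh_div_cosh, div_lt_one (Real.cosh_pos x)]
  exact Real.sinh_lt_cosh x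

lemma myNegOneLtTanh (x : ℝ) : -1 < Real.tanh x := by
  have := myTanhLtOne (-x)
  rw [Real.tanh_neg] at this; linarith

lemma myTanhMono : Monotone Real.tanh := by
  intro x y hxy
  rw [Real.tanh_eq_sinh_div_cosh, Real.tanh_eq_sinh_div_cosh,
    div_le_div_iff₀ (Real.cosh_pos x) (Real.cosh_pos y)]
  have h := Real.sinh_sub x y
  have h2 : Real.sinh (x - y) ≤ 0 := by
    have h3 : Real.sinh (x - y) ≤ Real.sinh 0 :=
      Real.sinh_le_sinh.mpr (by linarith)
    rwa [Real.sinh_zero] at h3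
  linarith

lemma myTanhCont : Continuous Real.tanh := by
  have : Real.tanh = fun x => Real.sinh x / Real.cosh x := by
    funext x; exact Real.tanh_eq_sinh_div_cosh x
  rw [this]
  exact Real.continuous_sinh.div Real.continuous_cosh fun x => (Real.cosh_pos x).ne'

/-- for even `n > 4` and `α > 0`, for every `b ∈ [0,1]` there is a unique
`a ∈ (0,1)` with `1 - 2a = tanh((α/(2n²))(n/2 - 1)((n/2)(a+b)² - 2a²))`. -/
theorem stmt16 (n : ℕ) (hn : 4 < n) (hne : Even n) (α : ℝ) (hα : 0 < α)
    (b : ℝ) (hb : b ∈ Set.Icc (0:ℝ) 1) :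
    ∃! a : ℝ, a ∈ Set.Ioo (0:ℝ) 1 ∧
      1 - 2 * a = Real.tanh (α / (2 * (n:ℝ)^2) * ((n:ℝ)/2 - 1) *
        ((n:ℝ)/2 * (a + b)^2 - 2 * a^2)) := by
  obtain ⟨hb0, hb1⟩ := hb
  have hn4 : (4:ℝ) < n := by exact_mod_cast hn
  set c : ℝ := α / (2 * (n:ℝ)^2) * ((n:ℝ)/2 - 1) with hc
  have hcpos : 0 < c := by
    apply mul_pos
    · apply div_pos hα; positivity
    · linarith
  set h : ℝ → ℝ := fun a => c * ((n:ℝ)/2 * (a + b)^2 - 2 * a^2) with hh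
  set F : ℝ → ℝ := fun a => 2 * a - 1 + Real.tanh (h a) with hF
  have hhmono : ∀ x y : ℝ, 0 ≤ x → x ≤ y → h x ≤ h y := by
    intro x y hx hxy
    have : (n:ℝ)/2 * (x + b)^2 - 2 * x^2 ≤ (n:ℝ)/2 * (y + b)^2 - 2 * y^2 := by
      nlinarith [mul_nonneg (mul_nonneg (by linarith : (0:ℝ) ≤ (n:ℝ) - 4)
        (by linarith : (0:ℝ) ≤ y - x)) (by linarith : (0:ℝ) ≤ y + x),
        mul_nonneg (mul_nonneg (by linarith : (0:ℝ) ≤ (n:ℝ)) hb0)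
        (by linarith : (0:ℝ) ≤ y - x)]
    exact mul_le_mul_of_nonneg_left this hcpos.le
  have hFmono : StrictMonoOn F (Set.Icc (0:ℝ) 1) := by
    intro x hx y hy hxy
    have h1 : Real.tanh (h x) ≤ Real.tanh (h y) :=
      myTanhMono (hhmono x y hx.1 hxy.le)
    simp only [hF]
    linarith
  have hFcont : ContinuousOn F (Set.Icc (0:ℝ) 1) := by
    apply Continuous.continuousOn
    exact (continuous_const.mul continuous_id).sub continuous_const |>.add
      (myTanhCont.comp (by continuity))
  have hF0 : F 0 < 0 := by
    have := myTanhLtOne (h 0)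
    simp only [hF]; linarith
  have hF1 : 0 < F 1 := by
    have := myNegOneLtTanh (h 1)
    simp only [hF]; linarith
  have hiv : (0:ℝ) ∈ F '' Set.Ioo 0 1 :=
    intermediate_value_Ioo (by norm_num) hFcont ⟨hF0, hF1⟩
  obtain ⟨a, ha, hFa⟩ := hiv
  refine ⟨a, ⟨ha, ?_⟩, ?_⟩
  · have : Real.tanh (h a) = 1 - 2 * a := by simp only [hF] at hFa; linarith
    rw [← this]
  · rintro y ⟨hy, hyeq⟩
    have hFy : F y = 0 := by simp only [hF, hh]; rw [← hyeq]; ring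
    have hFa0 : F a = 0 := hFa
    have hyI : y ∈ Set.Icc (0:ℝ) 1 := ⟨hy.1.le, hy.2.le⟩
    have haI : a ∈ Set.Icc (0:ℝ) 1 := ⟨ha.1.le, ha.2.le⟩
    exact hFmono.injOn hyI haI (by rw [hFy, hFa0])

end
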